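/- arXiv:2409.00621 — 2 statements merged into one kernel-verified Lean document; each statement's English description precedes it below -/
import Mathlib

section
/- Let A be an n×m real matrix of rank R, with POD basis {φ_i} (orthonormal eigenvectors of A Aᵀ with eigenvalues λ₁ ≥ ... ≥ λ_R > 0). Then among all r-dimensional subspaces V of ℝⁿ, the POD subspace span{φ₁,...,φ_r} minimizes the sum over columns a_j of ‖a_j − P_V a_j‖², where P_V is the orthogonal projection onto V; the minimum value is Σ_{i=r+1}^R λ_i. -/
open RealInnerProductSpace

/-- Optimality of the POD basis: among all `r`-dimensional subspaces `V` of ℝⁿ, the span of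
the first `r` POD modes minimizes the total squared projection error of the snapshots, and
the minimum value is the sum of the tail eigenvalues. -/
theorem pod_subspace_optimality
    {n m R : ℕ}
    (a : Fin m → EuclideanSpace ℝ (Fin n))
    (hrank : Module.finrank ℝ (Submodule.span ℝ (Set.range a)) = R)
    (lam : Fin R → ℝ) (φ : Fin R → EuclideanSpace ℝ (Fin n))
    (horth : Orthonormal ℝ φ)
    (hpos : ∀ i, 0 < lam i)
    (hmono : ∀ i j : Fin R, i ≤ j → lam j ≤ lam i)
    (heig : ∀ i, ∑ j, ⟪a j, φ i⟫ • a j = lam i • φ i)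
    (r : ℕ) (hr : r ≤ R) :
    (∑ j, ‖a j - (Submodule.orthogonalProjection
        (Submodule.span ℝ (Set.range fun i : Fin r => φ (Fin.castLE hr i)))
        (a j) : EuclideanSpace ℝ (Fin n))‖ ^ 2
      = ∑ i ∈ Finset.univ.filter (fun i : Fin R => r ≤ (i : ℕ)), lam i) ∧
    (∀ V : Submodule ℝ (EuclideanSpace ℝ (Fin n)), Module.finrank ℝ V = r →
      ∑ i ∈ Finset.univ.filter (fun i : Fin R => r ≤ (i : ℕ)), lam i
        ≤ ∑ j, ‖a j - (Submodule.orthogonalProjection V (a j) : EuclideanSpace ℝ (Fin n))‖ ^ 2) := by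
  classical
  set c : Fin R → Fin m → ℝ := fun i j => ⟪a j, φ i⟫ with hc
  have hite : ∀ i i' : Fin R, ⟪φ i, φ i'⟫ = if i = i' then (1:ℝ) else 0 :=
    orthonormal_iff_ite.mp horth
  -- H1
  have H1 : ∀ i i' : Fin R, ∑ j, c i j * c i' j = if i = i' then lam i else 0 := by
    intro i i'
    have h := congrArg (fun x : EuclideanSpace ℝ (Fin n) => ⟪x, φ i'⟫) (heig i)
    simp only [sum_inner, real_inner_smul_left] at h
    rw [hite i i'] at h
    simp only [hc]
    rw [h]
    by_cases hii : i = i' <;> simp [hii]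
  -- span equality
  have hφmem : ∀ i, φ i ∈ Submodule.span ℝ (Set.range a) := by
    intro i
    have hφeq : φ i = (lam i)⁻¹ • ∑ j, ⟪a j, φ i⟫ • a j := by
      rw [heig i, smul_smul, inv_mul_cancel₀ (hpos i).ne', one_smul]
    rw [hφeq]
    exact Submodule.smul_mem _ _ (Submodule.sum_mem _ fun j _ =>
      Submodule.smul_mem _ _ (Submodule.subset_span ⟨j, rfl⟩))
  have hWle : Submodule.span ℝ (Set.range φ) ≤ Submodule.span ℝ (Set.range a) :=
    Submodule.span_le.mpr (Set.range_subset_iff.mpr hφmem)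
  have hWrank : Module.finrank ℝ (Submodule.span ℝ (Set.range φ)) = R := by
    rw [finrank_span_eq_card horth.linearIndependent, Fintype.card_fin]
  have hW : Submodule.span ℝ (Set.range φ) = Submodule.span ℝ (Set.range a) :=
    Submodule.eq_of_le_of_finrank_le hWle (by rw [hrank, hWrank])
  have hamem : ∀ j, a j ∈ Submodule.span ℝ (Set.range φ) := by
    intro j; rw [hW]; exact Submodule.subset_span ⟨j, rfl⟩
  -- inner vanishing on a span
  have ortho_span : ∀ (s : Set (EuclideanSpace ℝ (Fin n))) (d : EuclideanSpace ℝ (Fin n)),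
      (∀ x ∈ s, ⟪d, x⟫ = 0) →
      ∀ w ∈ Submodule.span ℝ s, ⟪d, w⟫ = 0 := by
    intro s d hs w hw
    induction hw using Submodule.span_induction with
    | mem x hx => exact hs x hx
    | zero => exact inner_zero_right d
    | add x y _ _ hx hy => rw [inner_add_right, hx, hy, add_zero]
    | smul t x _ hx => rw [real_inner_smul_right, hx, mul_zero]
  -- H2 : decomposition of snapshots
  have H2 : ∀ j, a j = ∑ i, c i j • φ i := by
    intro j
    set d : EuclideanSpace ℝ (Fin n) := a j - ∑ i, c i j • φ i with hd
    have hdo : ∀ x ∈ Set.range φ, ⟪d, x⟫ = 0 := by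
      rintro x ⟨i, rfl⟩
      rw [hd, inner_sub_left, sum_inner]
      simp only [real_inner_smul_left, hite, mul_ite, mul_one, mul_zero]
      rw [Finset.sum_ite_eq' Finset.univ i (fun i' => c i' j)]
      simp [hc, real_inner_comm]
    have hdW : d ∈ Submodule.span ℝ (Set.range φ) :=
      Submodule.sub_mem _ (hamem j) (Submodule.sum_mem _ fun i _ =>
        Submodule.smul_mem _ _ (Submodule.subset_span ⟨i, rfl⟩))
    have hd0 : d = 0 := inner_self_eq_zero.mp (ortho_span _ _ hdo d hdW)
    exact (sub_eq_zero.mp hd0)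
  -- H3
  have H3 : ∀ v : EuclideanSpace ℝ (Fin n),
      ∑ j, ⟪a j, v⟫ ^ 2 = ∑ i, lam i * ⟪φ i, v⟫ ^ 2 := by
    intro v
    have key : ∀ j, ⟪a j, v⟫ = ∑ i, c i j * ⟪φ i, v⟫ := by
      intro j
      conv_lhs => rw [H2 j]
      rw [sum_inner]
      exact Finset.sum_congr rfl fun i _ => real_inner_smul_left (φ i) v (c i j)
    calc ∑ j, ⟪a j, v⟫ ^ 2
        = ∑ j, ∑ i, ∑ i', (c i j * ⟪φ i, v⟫) * (c i' j * ⟪φ i', v⟫) := by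
          simp_rw [key, sq, Finset.sum_mul_sum]
      _ = ∑ i, ∑ i', (⟪φ i, v⟫ * ⟪φ i', v⟫) * ∑ j, c i j * c i' j := by
          rw [Finset.sum_comm]
          refine Finset.sum_congr rfl fun i _ => ?_
          rw [Finset.sum_comm]
          refine Finset.sum_congr rfl fun i' _ => ?_
          rw [Finset.mul_sum]
          exact Finset.sum_congr rfl fun j _ => by ring
      _ = ∑ i, lam i * ⟪φ i, v⟫ ^ 2 := by
          refine Finset.sum_congr rfl fun i _ => ?_
          simp_rw [H1, mul_ite, mul_zero]
          simp only [Finset.sum_ite_eq, Finset.mem_univ, if_true]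
          ring
  -- total energy
  have hnormsq : ∀ j, ‖a j‖ ^ 2 = ∑ i, c i j ^ 2 := by
    intro j
    rw [← real_inner_self_eq_norm_sq]
    conv_lhs => rw [H2 j]
    rw [horth.inner_sum]
    simp [sq]
  have htot : ∑ j, ‖a j‖ ^ 2 = ∑ i, lam i := by
    simp_rw [hnormsq]
    rw [Finset.sum_comm]
    refine Finset.sum_congr rfl fun i _ => ?_
    have h := H1 i i
    rw [if_pos rfl] at h
    rw [← h]
    exact Finset.sum_congr rfl fun j _ => pow_two (c i j)
  -- Pythagoras
  have pyth : ∀ (V : Submodule ℝ (EuclideanSpace ℝ (Fin n))) (x : EuclideanSpace ℝ (Fin n)),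
      ‖x - (Submodule.orthogonalProjection V x : EuclideanSpace ℝ (Fin n))‖ ^ 2
        = ‖x‖ ^ 2 - ‖(Submodule.orthogonalProjection V x : EuclideanSpace ℝ (Fin n))‖ ^ 2 := by
    intro V x
    have ho : ⟪(Submodule.orthogonalProjection V x : EuclideanSpace ℝ (Fin n)),
        x - (Submodule.orthogonalProjection V x : EuclideanSpace ℝ (Fin n))⟫ = 0 :=
      Submodule.inner_right_of_mem_orthogonal (Submodule.orthogonalProjection V x).2
        (Submodule.sub_starProjection_mem_orthogonal x)
    have h := norm_add_sq_real (Submodule.orthogonalProjection V x : EuclideanSpace ℝ (Fin n))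
      (x - (Submodule.orthogonalProjection V x : EuclideanSpace ℝ (Fin n)))
    rw [add_sub_cancel, ho] at h
    linarith
  have hsplit : ∀ f : Fin R → ℝ,
      (∑ i ∈ Finset.univ.filter (fun i : Fin R => r ≤ (i : ℕ)), f i)
        + ∑ i ∈ Finset.univ.filter (fun i : Fin R => ¬ r ≤ (i : ℕ)), f i = ∑ i, f i := by
    intro f
    exact Finset.sum_filter_add_sum_filter_not _ _ f
  constructor
  · -- part 1
    set U := Submodule.span ℝ (Set.range fun i : Fin r => φ (Fin.castLE hr i)) with hU
    have Pj : ∀ j, (Submodule.orthogonalProjection U (a j) : EuclideanSpace ℝ (Fin n))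
        = ∑ i ∈ Finset.univ.filter (fun i : Fin R => ¬ r ≤ (i : ℕ)), c i j • φ i := by
      intro j
      apply Submodule.eq_starProjection_of_mem_of_inner_eq_zero
      · refine Submodule.sum_mem _ fun i hi => Submodule.smul_mem _ _ ?_
        have hilt : (i : ℕ) < r := by
          have := (Finset.mem_filter.mp hi).2
          omega
        exact Submodule.subset_span ⟨⟨(i : ℕ), hilt⟩, congrArg φ (Fin.ext rfl)⟩
      · intro w hw
        refine ortho_span _ _ ?_ w hw
        rintro x ⟨i0, rfl⟩
        rw [inner_sub_left, sum_inner]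
        simp only [real_inner_smul_left, hite, mul_ite, mul_one, mul_zero]
        rw [Finset.sum_ite_eq' _ (Fin.castLE hr i0) (fun i' => c i' j)]
        have hmem : Fin.castLE hr i0 ∈
            Finset.univ.filter (fun i : Fin R => ¬ r ≤ (i : ℕ)) := by
          simp only [Finset.mem_filter, Finset.mem_univ, true_and, Fin.coe_castLE, not_le]
          exact i0.2
        simp [hmem, hc, real_inner_comm]
    have diff : ∀ j, a j - (Submodule.orthogonalProjection U (a j) : EuclideanSpace ℝ (Fin n))
        = ∑ i ∈ Finset.univ.filter (fun i : Fin R => r ≤ (i : ℕ)), c i j • φ i := by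
      intro j
      rw [Pj j]
      have hv : (∑ i ∈ Finset.univ.filter (fun i : Fin R => r ≤ (i : ℕ)), c i j • φ i)
          + ∑ i ∈ Finset.univ.filter (fun i : Fin R => ¬ r ≤ (i : ℕ)), c i j • φ i
          = ∑ i, c i j • φ i :=
        Finset.sum_filter_add_sum_filter_not _ _ _
      rw [sub_eq_iff_eq_add, hv]
      exact H2 j
    have hnorm : ∀ j, ‖a j - (Submodule.orthogonalProjection U (a j) : EuclideanSpace ℝ (Fin n))‖ ^ 2
        = ∑ i ∈ Finset.univ.filter (fun i : Fin R => r ≤ (i : ℕ)), c i j ^ 2 := by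
      intro j
      rw [diff j, ← real_inner_self_eq_norm_sq, horth.inner_sum]
      simp [sq]
    simp_rw [hnorm]
    rw [Finset.sum_comm]
    refine Finset.sum_congr rfl fun i _ => ?_
    have h := H1 i i
    rw [if_pos rfl] at h
    rw [← h]
    exact Finset.sum_congr rfl fun j _ => pow_two (c i j)
  · -- part 2
    intro V hV
    set b := (stdOrthonormalBasis ℝ V).reindex (finCongr hV) with hb
    set v : Fin r → EuclideanSpace ℝ (Fin n) := fun k => (b k : EuclideanSpace ℝ (Fin n)) with hv
    have hvon : Orthonormal ℝ v := by
      rw [orthonormal_iff_ite]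
      intro k l
      have h := orthonormal_iff_ite.mp b.orthonormal k l
      rwa [Submodule.coe_inner] at h
    have projnorm : ∀ x : EuclideanSpace ℝ (Fin n),
        ‖(Submodule.orthogonalProjection V x : EuclideanSpace ℝ (Fin n))‖ ^ 2 = ∑ k, ⟪v k, x⟫ ^ 2 := by
      intro x
      have h := b.orthogonalProjectionOnto_apply_eq_sum x
      have hcoe : (Submodule.orthogonalProjection V x : EuclideanSpace ℝ (Fin n))
          = ∑ k, ⟪v k, x⟫ • v k := by
        rw [h]
        push_cast
        rfl
      rw [hcoe, ← real_inner_self_eq_norm_sq, hvon.inner_sum]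
      simp [sq]
    set s : Fin R → ℝ := fun i => ∑ k, ⟪φ i, v k⟫ ^ 2 with hs
    have hs_nonneg : ∀ i, 0 ≤ s i := fun i => Finset.sum_nonneg fun k _ => sq_nonneg _
    have hs_le_one : ∀ i, s i ≤ 1 := by
      intro i
      have h := hvon.sum_inner_products_le (φ i) (s := Finset.univ)
      have h1 : ‖φ i‖ = 1 := horth.1 i
      simp only [Real.norm_eq_abs, sq_abs, h1, one_pow] at h
      calc s i = ∑ k, ⟪v k, φ i⟫ ^ 2 :=
            Finset.sum_congr rfl fun k _ => by rw [real_inner_comm]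
        _ ≤ 1 := h
    have hs_sum : ∑ i, s i ≤ (r : ℝ) := by
      have hb1 : ∀ k, ∑ i, ⟪φ i, v k⟫ ^ 2 ≤ 1 := by
        intro k
        have h := horth.sum_inner_products_le (v k) (s := Finset.univ)
        have h1 : ‖v k‖ = 1 := hvon.1 k
        simpa [Real.norm_eq_abs, sq_abs, h1] using h
      calc ∑ i, s i = ∑ k : Fin r, ∑ i, ⟪φ i, v k⟫ ^ 2 := Finset.sum_comm
        _ ≤ ∑ _k : Fin r, (1:ℝ) := Finset.sum_le_sum fun k _ => hb1 k
        _ = (r : ℝ) := by simp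
    have hproj_sum : ∑ j, ‖(Submodule.orthogonalProjection V (a j) : EuclideanSpace ℝ (Fin n))‖ ^ 2
        = ∑ i, lam i * s i := by
      simp_rw [projnorm]
      rw [Finset.sum_comm]
      calc ∑ k : Fin r, ∑ j, ⟪v k, a j⟫ ^ 2
          = ∑ k : Fin r, ∑ i, lam i * ⟪φ i, v k⟫ ^ 2 := by
            refine Finset.sum_congr rfl fun k _ => ?_
            rw [← H3 (v k)]
            exact Finset.sum_congr rfl fun j _ => by rw [real_inner_comm]
        _ = ∑ i, lam i * s i := by
            rw [Finset.sum_comm]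
            refine Finset.sum_congr rfl fun i _ => ?_
            rw [hs, Finset.mul_sum]
    set μ : ℝ := if h : r < R then lam ⟨r, h⟩ else 0 with hμ
    have hμ0 : 0 ≤ μ := by
      rw [hμ]; split
      · exact (hpos _).le
      · exact le_refl 0
    have hle1 : ∀ i : Fin R, (i : ℕ) < r → μ ≤ lam i := by
      intro i hi
      rw [hμ]; split
      · exact hmono i _ (by rw [Fin.le_def]; simpa using hi.le)
      · exact (hpos i).le
    have hle2 : ∀ i : Fin R, r ≤ (i : ℕ) → lam i ≤ μ := by
      intro i hi
      have hrR : r < R := lt_of_le_of_lt hi i.2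
      rw [hμ, dif_pos hrR]
      exact hmono ⟨r, hrR⟩ i (by rw [Fin.le_def]; simpa using hi)
    have hcard : (Finset.univ.filter (fun i : Fin R => ¬ r ≤ (i : ℕ))).card = r := by
      rw [show (Finset.univ.filter (fun i : Fin R => ¬ r ≤ (i : ℕ)))
          = Finset.map (Fin.castLEEmb hr) Finset.univ from ?_]
      · simp
      · ext i
        simp only [Finset.mem_filter, Finset.mem_univ, true_and, Finset.mem_map,
          Fin.castLEEmb_apply, not_le]
        constructor
        · intro hi
          exact ⟨⟨(i : ℕ), hi⟩, Fin.ext rfl⟩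
        · rintro ⟨k, -, rfl⟩
          simpa using k.2
    have key : ∑ i, lam i * s i
        ≤ ∑ i ∈ Finset.univ.filter (fun i : Fin R => ¬ r ≤ (i : ℕ)), lam i := by
      have step1 : ∑ i, lam i * s i = ∑ i, ((lam i - μ) * s i) + μ * ∑ i, s i := by
        rw [Finset.mul_sum, ← Finset.sum_add_distrib]
        exact Finset.sum_congr rfl fun i _ => by ring
      have step2 : ∑ i, (lam i - μ) * s i
          ≤ ∑ i ∈ Finset.univ.filter (fun i : Fin R => ¬ r ≤ (i : ℕ)), (lam i - μ) := by
        rw [← Finset.sum_filter_add_sum_filter_not Finset.univ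
          (fun i : Fin R => ¬ r ≤ (i : ℕ)) (fun i => (lam i - μ) * s i)]
        have hA : ∑ i ∈ Finset.univ.filter (fun i : Fin R => ¬ r ≤ (i : ℕ)), (lam i - μ) * s i
            ≤ ∑ i ∈ Finset.univ.filter (fun i : Fin R => ¬ r ≤ (i : ℕ)), (lam i - μ) := by
          refine Finset.sum_le_sum fun i hi => ?_
          have hlt : (i : ℕ) < r := by
            have := (Finset.mem_filter.mp hi).2; omega
          have h1 : 0 ≤ lam i - μ := sub_nonneg.mpr (hle1 i hlt)
          calc (lam i - μ) * s i ≤ (lam i - μ) * 1 :=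
                mul_le_mul_of_nonneg_left (hs_le_one i) h1
            _ = lam i - μ := mul_one _
        have hB : ∑ i ∈ Finset.univ.filter (fun i : Fin R => ¬¬ r ≤ (i : ℕ)),
            (lam i - μ) * s i ≤ 0 := by
          refine Finset.sum_nonpos fun i hi => ?_
          have hge : r ≤ (i : ℕ) := by
            have := (Finset.mem_filter.mp hi).2; omega
          exact mul_nonpos_of_nonpos_of_nonneg (sub_nonpos.mpr (hle2 i hge)) (hs_nonneg i)
        linarith
      have step3 : μ * ∑ i, s i ≤ μ * r := mul_le_mul_of_nonneg_left hs_sum hμ0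
      have step4 : ∑ i ∈ Finset.univ.filter (fun i : Fin R => ¬ r ≤ (i : ℕ)), (lam i - μ)
          = (∑ i ∈ Finset.univ.filter (fun i : Fin R => ¬ r ≤ (i : ℕ)), lam i) - μ * r := by
        rw [Finset.sum_sub_distrib, Finset.sum_const, hcard, nsmul_eq_mul]
        ring
      linarith
    have herr : ∑ j, ‖a j - (Submodule.orthogonalProjection V (a j) : EuclideanSpace ℝ (Fin n))‖ ^ 2
        = ∑ i, lam i - ∑ i, lam i * s i := by
      simp_rw [pyth V]
      rw [Finset.sum_sub_distrib, htot, hproj_sum]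
    rw [herr]
    have hs2 := hsplit lam
    linarith
end

section
/- Let S ∈ ℝ^{n×n} be a symmetric positive definite matrix (the stiffness/weighting matrix) and M ∈ ℝ^{n×n} symmetric positive definite (the mass matrix). Let {φ_i}_{i=1}^r ⊂ ℝⁿ be vectors orthonormal with respect to the M-inner product. Then for every v in span{φ₁,...,φ_r}, ‖v‖_S ≤ ‖S_r‖₂^{1/2} ‖v‖_M, where S_r is the r×r matrix with entries (S_r)_{ij} = φ_iᵀ S φ_j, ‖·‖₂ is the spectral norm, ‖v‖_S² = vᵀ S v and ‖v‖_M² = vᵀ M v. -/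
open Matrix Finset RealInnerProductSpace
/-- POD inverse estimate (Kunisch–Volkwein, Lemma 2): on the span of an `M`-orthonormal
family, the `S`-norm is bounded by the spectral norm of the reduced stiffness matrix
times the `M`-norm. -/
theorem pod_inverse_estimate
    {n r : ℕ}
    (S M : Matrix (Fin n) (Fin n) ℝ)
    (hS : S.PosDef) (hM : M.PosDef)
    (φ : Fin r → (Fin n → ℝ))
    (horthM : ∀ i j, φ i ⬝ᵥ M.mulVec (φ j) = if i = j then (1 : ℝ) else 0)
    (v : Fin n → ℝ)
    (hv : v ∈ Submodule.span ℝ (Set.range φ)) :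
    Real.sqrt (v ⬝ᵥ S.mulVec v) ≤
      Real.sqrt ‖LinearMap.toContinuousLinearMap
          (Matrix.toEuclideanLin (Matrix.of fun i j : Fin r => φ i ⬝ᵥ S.mulVec (φ j)))‖
        * Real.sqrt (v ⬝ᵥ M.mulVec v) := by
  obtain ⟨c, rfl⟩ := (Submodule.mem_span_range_iff_exists_fun ℝ).mp hv
  set Sr : Matrix (Fin r) (Fin r) ℝ :=
    Matrix.of fun i j : Fin r => φ i ⬝ᵥ S.mulVec (φ j) with hSr
  set A := LinearMap.toContinuousLinearMap (Matrix.toEuclideanLin Sr) with hA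
  set B : Matrix (Fin n) (Fin r) ℝ := Matrix.of fun k i => φ i k with hB
  have hvB : ∑ i, c i • φ i = B *ᵥ c := by
    ext k
    simp [hB, Matrix.mulVec, dotProduct, mul_comm]
  have key : ∀ T : Matrix (Fin n) (Fin n) ℝ,
      (B *ᵥ c) ⬝ᵥ T.mulVec (B *ᵥ c) = c ⬝ᵥ (Bᵀ * T * B) *ᵥ c := by
    intro T
    rw [Matrix.mulVec_mulVec, Matrix.dotProduct_mulVec, ← Matrix.vecMul_transpose,
      Matrix.vecMul_vecMul, ← Matrix.mul_assoc, Matrix.dotProduct_mulVec]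
  have hred : ∀ T : Matrix (Fin n) (Fin n) ℝ,
      Bᵀ * T * B = Matrix.of fun i j : Fin r => φ i ⬝ᵥ T.mulVec (φ j) := by
    intro T
    ext i j
    simp only [hB, Matrix.mul_apply, dotProduct, Matrix.mulVec, Matrix.of_apply,
      Matrix.transpose_apply, Finset.sum_mul, Finset.mul_sum]
    rw [Finset.sum_comm]
    exact Finset.sum_congr rfl fun k _ => Finset.sum_congr rfl fun l _ => by ring
  have hMv : (∑ i, c i • φ i) ⬝ᵥ M.mulVec (∑ i, c i • φ i) = ∑ i, c i ^ 2 := by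
    rw [hvB, key M, hred M]
    have : (Matrix.of fun i j : Fin r => φ i ⬝ᵥ M.mulVec (φ j)) = (1 : Matrix (Fin r) (Fin r) ℝ) := by
      ext i j
      simp [horthM i j, Matrix.one_apply]
    rw [this]
    simp [dotProduct, sq]
  set x : EuclideanSpace ℝ (Fin r) := (WithLp.equiv 2 (Fin r → ℝ)).symm c with hx
  have hnormx : ‖x‖ ^ 2 = ∑ i, c i ^ 2 := by
    rw [EuclideanSpace.norm_eq, Real.sq_sqrt (by positivity)]
    simp [hx, sq_abs]
  have hinner : (∑ i, c i • φ i) ⬝ᵥ S.mulVec (∑ i, c i • φ i) = (inner ℝ (A x) x : ℝ) := by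
    rw [hvB, key S, hred S, ← hSr]
    have hAx : A x = (WithLp.equiv 2 (Fin r → ℝ)).symm (Sr *ᵥ c) := by
      simp [hA, hx, Matrix.toEuclideanLin_apply_piLp_toLp]
    rw [hAx, hx, dotProduct_comm]
    simp [PiLp.inner_apply, dotProduct, mul_comm]
  have hbound : (inner ℝ (A x) x : ℝ) ≤ ‖A‖ * ‖x‖ ^ 2 := by
    calc (inner ℝ (A x) x : ℝ) ≤ ‖A x‖ * ‖x‖ := real_inner_le_norm _ _
      _ ≤ (‖A‖ * ‖x‖) * ‖x‖ :=
          mul_le_mul_of_nonneg_right (A.le_opNorm x) (norm_nonneg _)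
      _ = ‖A‖ * ‖x‖ ^ 2 := by ring
  rw [← Real.sqrt_mul (norm_nonneg _)]
  apply Real.sqrt_le_sqrt
  rw [hinner, hMv, ← hnormx]
  exact hbound
end
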